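/- Let y ∈ ℝ and U be uniformly distributed on an interval [a, a+1) of length 1. Define K = ⌊y + U⌉ (round to nearest integer) and Ŷ = K - U. Then Ŷ - y is uniformly distributed on [-1/2, 1/2). -/

import Mathlib

open MeasureTheory

lemma map_reflect (d p q : ℝ) :
    Measure.map (fun u : ℝ => d - u) (volume.restrict (Set.Ico p q))
      = volume.restrict (Set.Ioc (d - q) (d - p)) := by
  have hmp : MeasurePreserving (fun u : ℝ => d - u) volume volume := by
    have h1 : MeasurePreserving (fun u : ℝ => -u) (volume : Measure ℝ) volume :=
      Measure.measurePreserving_neg volume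
    have h2 := measurePreserving_add_left (volume : Measure ℝ) d
    simpa [Function.comp_def, sub_eq_add_neg] using h2.comp h1
  have hpre : (fun u : ℝ => d - u) ⁻¹' Set.Ioc (d - q) (d - p) = Set.Ico p q := by
    ext u
    simp only [Set.mem_preimage, Set.mem_Ioc, Set.mem_Ico]
    constructor <;> intro h <;> constructor <;> linarith [h.1, h.2]
  calc Measure.map (fun u : ℝ => d - u) (volume.restrict (Set.Ico p q))
      = Measure.map (fun u : ℝ => d - u)
          (volume.restrict ((fun u : ℝ => d - u) ⁻¹' Set.Ioc (d - q) (d - p))) := by rw [hpre]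
    _ = (Measure.map (fun u : ℝ => d - u) volume).restrict (Set.Ioc (d - q) (d - p)) :=
        (Measure.restrict_map hmp.measurable measurableSet_Ioc).symm
    _ = volume.restrict (Set.Ioc (d - q) (d - p)) := by rw [hmp.map_eq]

theorem stmt_5 (y a : ℝ) :
    Measure.map (fun u : ℝ => ((round (y + u) : ℝ) - u) - y)
        (volume.restrict (Set.Ico a (a + 1)))
      = volume.restrict (Set.Ico (-(1 / 2) : ℝ) (1 / 2)) := by
  set c : ℝ := y + 1 / 2 with hc
  set n : ℤ := ⌊a + c⌋ with hn
  set t : ℝ := Int.fract (a + c) with ht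
  set b : ℝ := a + 1 - t with hb
  have ht0 : 0 ≤ t := Int.fract_nonneg _
  have ht1 : t < 1 := Int.fract_lt_one _
  have hnt : (n : ℝ) + t = a + c := by rw [ht, Int.fract]; ring
  have hab : a ≤ b := by rw [hb]; linarith
  have hb1 : b ≤ a + 1 := by rw [hb]; linarith
  have hfmeas : Measurable (fun u : ℝ => ((round (y + u) : ℝ) - u) - y) := by
    have h0 : Measurable fun u : ℝ => (⌊(y + u) + 1/2⌋ : ℤ) :=
      ((measurable_const.add measurable_id).add measurable_const).floor
    have : Measurable fun u : ℝ => ((round (y + u) : ℤ) : ℝ) := by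
      simp only [round_eq]
      exact measurable_from_top.comp h0
    exact (this.sub measurable_id).sub measurable_const
  -- split the domain
  have hsplit : volume.restrict (Set.Ico a (a + 1))
      = volume.restrict (Set.Ico a b) + volume.restrict (Set.Ico b (a + 1)) := by
    rw [← Measure.restrict_union (Set.Ico_disjoint_Ico_same)
      measurableSet_Ico, Set.Ico_union_Ico_eq_Ico hab hb1]
  rw [hsplit, Measure.map_add _ _ hfmeas]
  -- piece 1
  have h1 : Measure.map (fun u : ℝ => ((round (y + u) : ℝ) - u) - y)
      (volume.restrict (Set.Ico a b))
      = volume.restrict (Set.Ioc (-(1/2)) (1/2 - t)) := by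
    have hcongr : (fun u : ℝ => ((round (y + u) : ℝ) - u) - y)
        =ᵐ[volume.restrict (Set.Ico a b)] (fun u : ℝ => ((n : ℝ) + 1/2 - c) - u) := by
      refine (ae_restrict_iff' measurableSet_Ico).2 (Filter.Eventually.of_forall ?_)
      intro u hu
      have hr : round (y + u) = n := by
        rw [round_eq]
        apply Int.floor_eq_iff.2
        constructor
        · have : y + u + 1/2 = u + c := by rw [hc]; ring
          rw [this]
          have := hu.1
          linarith [hnt]
        · have : y + u + 1/2 = u + c := by rw [hc]; ring
          rw [this]
          have := hu.2
          rw [hb] at this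
          push_cast
          linarith [hnt]
      simp only [hr, hc]; push_cast; ring
    have e1 : (n : ℝ) + 1/2 - c - b = -(1/2) := by rw [hb]; linear_combination hnt
    have e2 : (n : ℝ) + 1/2 - c - a = 1/2 - t := by linear_combination hnt
    rw [Measure.map_congr hcongr, map_reflect, e1, e2]
  -- piece 2
  have h2 : Measure.map (fun u : ℝ => ((round (y + u) : ℝ) - u) - y)
      (volume.restrict (Set.Ico b (a + 1)))
      = volume.restrict (Set.Ioc (1/2 - t) (1/2)) := by
    have hcongr : (fun u : ℝ => ((round (y + u) : ℝ) - u) - y)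
        =ᵐ[volume.restrict (Set.Ico b (a + 1))] (fun u : ℝ => ((n : ℝ) + 3/2 - c) - u) := by
      refine (ae_restrict_iff' measurableSet_Ico).2 (Filter.Eventually.of_forall ?_)
      intro u hu
      have hr : round (y + u) = n + 1 := by
        rw [round_eq]
        apply Int.floor_eq_iff.2
        have huc : y + u + 1/2 = u + c := by rw [hc]; ring
        constructor
        · rw [huc]
          have := hu.1
          rw [hb] at this
          push_cast
          linarith [hnt]
        · rw [huc]
          have := hu.2
          push_cast
          linarith [hnt]
      simp only [hr, hc]; push_cast; ring
    have e1 : (n : ℝ) + 3/2 - c - (a + 1) = 1/2 - t := by linear_combination hnt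
    have e2 : (n : ℝ) + 3/2 - c - b = 1/2 := by rw [hb]; linear_combination hnt
    rw [Measure.map_congr hcongr, map_reflect, e1, e2]
  rw [h1, h2, ← Measure.restrict_union (Set.Ioc_disjoint_Ioc_of_le le_rfl) measurableSet_Ioc,
    Set.Ioc_union_Ioc_eq_Ioc (by linarith) (by linarith)]
  exact Measure.restrict_congr_set Ico_ae_eq_Ioc.symm
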